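/- Coupling/group-privacy bound: if M : X^n → O is ε-DP, then for any probability measures P, Q, Q' on X, (1/n)·KL(M(Q^n) ‖ M(P^n)) ≤ KL(Q'‖P) + ε·TV(Q', Q). -/

import Mathlib

open MeasureTheory ProbabilityTheory Real
open scoped ENNReal

/-- `ε`-differential privacy for a Markov kernel `M : Xⁿ → O`. -/
def IsEpsDP {X O : Type*} [MeasurableSpace X] [MeasurableSpace O] [DecidableEq X] {n : ℕ}
    (M : Kernel (Fin n → X) O) (ε : ℝ) : Prop :=
  ∀ x x' : Fin n → X, hammingDist x x' ≤ 1 →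
    ∀ S : Set O, MeasurableSet S → M x S ≤ ENNReal.ofReal (Real.exp ε) * M x' S

/-- The output distribution of the mechanism `M` on i.i.d. input from `P`. -/
noncomputable def outDist {X O : Type*} [MeasurableSpace X] [MeasurableSpace O]
    {n : ℕ} (M : Kernel (Fin n → X) O) (P : Measure X) : Measure O :=
  (Measure.pi fun _ : Fin n => P).bind (fun x => M x)

open Classical in
/-- The Kullback–Leibler divergence `KL(ν‖μ)`, valued in `ℝ≥0∞`. -/
noncomputable def klDiv {O : Type*} [MeasurableSpace O] (ν μ : Measure O) : ℝ≥0∞ :=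
  if ν ≪ μ ∧ Integrable (llr ν μ) ν then ENNReal.ofReal (∫ o, llr ν μ o ∂ν) else ⊤

/-- The total variation distance between two measures. -/
noncomputable def tvDist {X : Type*} [MeasurableSpace X] (μ ν : Measure X) : ℝ≥0∞ :=
  ⨆ (S : Set X) (_ : MeasurableSet S), μ S - ν S

section Aux
variable {O : Type*} [MeasurableSpace O]

lemma integrable_of_bdd {ρ : Measure O} [IsFiniteMeasure ρ] {g : O → ℝ} {B : ℝ}
    (hg : Measurable g) (hb : ∀ o, |g o| ≤ B) : Integrable g ρ :=
  Integrable.mono' (integrable_const B) hg.aestronglyMeasurable (Filter.Eventually.of_forall hb)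

lemma rnDeriv_le_const {ρ τ : Measure O} [IsFiniteMeasure ρ] [IsFiniteMeasure τ]
    {C : ℝ≥0∞} (hC : C ≠ ∞) (h : ∀ s, MeasurableSet s → ρ s ≤ C * τ s) :
    ρ.rnDeriv τ ≤ᵐ[τ] fun _ => C := by
  have hac : ρ ≪ τ := by
    refine Measure.AbsolutelyContinuous.mk fun s hs h0 => ?_
    have := h s hs
    rw [h0, mul_zero] at this
    exact le_antisymm this (zero_le)
  set g := ρ.rnDeriv τ with hg
  have hgm : Measurable g := Measure.measurable_rnDeriv ρ τ
  have hwd : τ.withDensity g = ρ := Measure.withDensity_rnDeriv_eq ρ τ hac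
  rw [Filter.EventuallyLE, ae_iff]
  by_contra hpos
  simp only [not_le] at hpos
  set A := {x | C < g x} with hA
  set Ak := fun k : ℕ => {x | C + ((k : ℝ≥0∞) + 1)⁻¹ ≤ g x} with hAk
  have hAkm : ∀ k, MeasurableSet (Ak k) := fun k => measurableSet_le measurable_const hgm
  have hsub : A ⊆ ⋃ k, Ak k := by
    intro x hx
    rcases eq_or_ne (g x) ∞ with hgx | hgx
    · exact Set.mem_iUnion.2 ⟨0, by simp [hAk, hgx]⟩
    · by_contra hn
      simp only [Set.mem_iUnion, hAk, Set.mem_setOf_eq, not_exists, not_le] at hn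
      have : g x ≤ C := by
        refine ENNReal.le_of_forall_pos_le_add fun δ hδ _ => ?_
        obtain ⟨n, hn'⟩ := ENNReal.exists_inv_nat_lt (a := (δ : ℝ≥0∞))
          (by exact_mod_cast hδ.ne')
        refine le_trans (hn n).le (add_le_add le_rfl ?_)
        refine le_trans (ENNReal.inv_le_inv.2 ?_) hn'.le
        exact_mod_cast Nat.le_succ n
      exact absurd this (not_le.2 hx)
  have hAne : τ A ≠ 0 := hpos
  have : ∃ k, τ (Ak k) ≠ 0 := by
    by_contra hk
    push_neg at hk
    have : τ (⋃ k, Ak k) = 0 := measure_iUnion_null hk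
    exact hAne (measure_mono_null hsub this)
  obtain ⟨k, hk⟩ := this
  set δ : ℝ≥0∞ := ((k : ℝ≥0∞) + 1)⁻¹ with hδ
  have hδ0 : δ ≠ 0 :=
    ENNReal.inv_ne_zero.2 (ENNReal.add_ne_top.2 ⟨ENNReal.natCast_ne_top k, ENNReal.one_ne_top⟩)
  have h1 : (C + δ) * τ (Ak k) ≤ ρ (Ak k) := by
    rw [← hwd, withDensity_apply _ (hAkm k)]
    calc (C + δ) * τ (Ak k) = ∫⁻ _ in Ak k, (C + δ) ∂τ := by rw [setLIntegral_const, mul_comm]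
    _ ≤ ∫⁻ x in Ak k, g x ∂τ := setLIntegral_mono hgm fun x hx => hx
  have h2 : ρ (Ak k) ≤ C * τ (Ak k) := h _ (hAkm k)
  have h3 : C * τ (Ak k) + δ * τ (Ak k) ≤ C * τ (Ak k) := by
    calc C * τ (Ak k) + δ * τ (Ak k) = (C + δ) * τ (Ak k) := (add_mul _ _ _).symm
    _ ≤ ρ (Ak k) := h1
    _ ≤ C * τ (Ak k) := h2
  have h4 : C * τ (Ak k) < C * τ (Ak k) + δ * τ (Ak k) :=
    ENNReal.lt_add_right (ENNReal.mul_ne_top hC (measure_ne_top τ _)) (mul_ne_zero hδ0 hk)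
  exact absurd (lt_of_lt_of_le h4 h3) (lt_irrefl _)

lemma integral_llr_nonneg {ρ τ : Measure O} [IsProbabilityMeasure ρ] [IsProbabilityMeasure τ]
    (h : ρ ≪ τ) (hi : Integrable (llr ρ τ) ρ) : 0 ≤ ∫ x, llr ρ τ x ∂ρ := by
  set g := ρ.rnDeriv τ with hgdef
  have hgm : Measurable g := Measure.measurable_rnDeriv ρ τ
  have hae1 : ∀ᵐ x ∂ρ, 0 < g x := Measure.rnDeriv_pos h
  have hae2 : ∀ᵐ x ∂ρ, g x < ∞ := h.ae_le (Measure.rnDeriv_lt_top ρ τ)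
  have hlin : ∫⁻ x, (g x)⁻¹ ∂ρ ≤ 1 := by
    conv_lhs => rw [← Measure.withDensity_rnDeriv_eq ρ τ h]
    rw [← hgdef, show (fun x => (g x)⁻¹) = g⁻¹ from rfl,
      lintegral_withDensity_eq_lintegral_mul _ hgm hgm.inv]
    calc ∫⁻ x, (g * g⁻¹) x ∂τ ≤ ∫⁻ _, 1 ∂τ := by
          refine lintegral_mono fun x => ?_
          simp only [Pi.mul_apply, Pi.inv_apply]
          exact ENNReal.mul_inv_le_one (g x)
    _ = 1 := by simp
  have hint_inv : Integrable (fun x => (g x).toReal⁻¹) ρ := by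
    have : Integrable (fun x => ((g x)⁻¹).toReal) ρ :=
      integrable_toReal_of_lintegral_ne_top hgm.inv.aemeasurable (lt_of_le_of_lt hlin ENNReal.one_lt_top).ne
    simpa [ENNReal.toReal_inv] using this
  have hInt_le : ∫ x, (g x).toReal⁻¹ ∂ρ ≤ 1 := by
    have heq : ∫ x, ((g x)⁻¹).toReal ∂ρ = (∫⁻ x, (g x)⁻¹ ∂ρ).toReal := by
      refine integral_toReal hgm.inv.aemeasurable ?_
      filter_upwards [hae1] with x hx
      simpa [ENNReal.inv_lt_top] using hx
    have h1 : ∫ x, (g x).toReal⁻¹ ∂ρ = (∫⁻ x, (g x)⁻¹ ∂ρ).toReal := by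
      rw [← heq]; congr 1; ext x; rw [ENNReal.toReal_inv]
    rw [h1]
    calc (∫⁻ x, (g x)⁻¹ ∂ρ).toReal ≤ (1 : ℝ≥0∞).toReal :=
      ENNReal.toReal_mono ENNReal.one_ne_top hlin
    _ = 1 := by simp
  have hptwise : ∀ᵐ x ∂ρ, -(llr ρ τ x) ≤ (g x).toReal⁻¹ - 1 := by
    filter_upwards [hae1, hae2] with x hx1 hx2
    have hy : 0 < (g x).toReal := ENNReal.toReal_pos hx1.ne' hx2.ne
    have := Real.log_le_sub_one_of_pos (inv_pos.2 hy)
    rw [Real.log_inv] at this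
    simpa [llr] using this
  have : -(∫ x, llr ρ τ x ∂ρ) ≤ ∫ x, ((g x).toReal⁻¹ - 1) ∂ρ := by
    rw [← integral_neg]
    exact integral_mono_ae hi.neg (hint_inv.sub (integrable_const 1)) hptwise
  rw [integral_sub hint_inv (integrable_const 1)] at this
  simp only [integral_const, measure_univ, probReal_univ, ENNReal.toReal_one, smul_eq_mul, one_mul] at this
  linarith [hInt_le]

lemma gibbs_ineq {ρ τ : Measure O} [IsProbabilityMeasure ρ] [IsProbabilityMeasure τ]
    (h : ρ ≪ τ) (hi : Integrable (llr ρ τ) ρ) {g : O → ℝ} {B : ℝ}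
    (hg : Measurable g) (hb : ∀ o, |g o| ≤ B) :
    ∫ x, g x ∂ρ - log (∫ x, exp (g x) ∂τ) ≤ ∫ x, llr ρ τ x ∂ρ := by
  have hgρ : Integrable g ρ := integrable_of_bdd hg hb
  have hexp : Integrable (fun x => exp (g x)) τ := by
    refine integrable_of_bdd (B := exp B) hg.exp fun o => ?_
    rw [abs_of_pos (exp_pos _)]
    exact exp_le_exp.2 ((abs_le.1 (hb o)).2)
  have hP : IsProbabilityMeasure (τ.tilted g) := isProbabilityMeasure_tilted hexp
  have hac2 : ρ ≪ τ.tilted g := h.trans (absolutelyContinuous_tilted hexp)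
  have heq := integral_llr_tilted_right h hgρ hexp hi
  have hint2 : Integrable (llr ρ (τ.tilted g)) ρ := integrable_llr_tilted_right h hgρ hi hexp
  have h0 : 0 ≤ ∫ x, llr ρ (τ.tilted g) x ∂ρ := integral_llr_nonneg hac2 hint2
  rw [heq] at h0
  linarith

end Aux

section Aux2
variable {O : Type*} [MeasurableSpace O]

lemma ratio_facts {ρ τ : Measure O} [IsProbabilityMeasure ρ] [IsProbabilityMeasure τ] {r : ℝ}
    (h1 : ∀ s, MeasurableSet s → ρ s ≤ ENNReal.ofReal (exp r) * τ s)
    (h2 : ∀ s, MeasurableSet s → τ s ≤ ENNReal.ofReal (exp r) * ρ s) :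
    ρ ≪ τ ∧ (∀ᵐ x ∂τ, ENNReal.ofReal (exp (-r)) ≤ ρ.rnDeriv τ x
      ∧ ρ.rnDeriv τ x ≤ ENNReal.ofReal (exp r)) := by
  have hC : (ENNReal.ofReal (exp r)) ≠ ∞ := ENNReal.ofReal_ne_top
  have hac : ρ ≪ τ := by
    refine Measure.AbsolutelyContinuous.mk fun s hs h0 => ?_
    have := h1 s hs; rw [h0, mul_zero] at this
    exact le_antisymm this (zero_le)
  have hac' : τ ≪ ρ := by
    refine Measure.AbsolutelyContinuous.mk fun s hs h0 => ?_
    have := h2 s hs; rw [h0, mul_zero] at this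
    exact le_antisymm this (zero_le)
  have hup : ρ.rnDeriv τ ≤ᵐ[τ] fun _ => ENNReal.ofReal (exp r) := rnDeriv_le_const hC h1
  have hup' : τ.rnDeriv ρ ≤ᵐ[ρ] fun _ => ENNReal.ofReal (exp r) := rnDeriv_le_const hC h2
  have hup'τ : τ.rnDeriv ρ ≤ᵐ[τ] fun _ => ENNReal.ofReal (exp r) := hac'.ae_le hup'
  have hinv : (τ.rnDeriv ρ)⁻¹ =ᵐ[τ] ρ.rnDeriv τ := Measure.inv_rnDeriv hac'
  refine ⟨hac, ?_⟩
  filter_upwards [hup, hup'τ, hinv] with x h1x h2x h3x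
  refine ⟨?_, h1x⟩
  rw [← h3x]
  have : ENNReal.ofReal (exp (-r)) = (ENNReal.ofReal (exp r))⁻¹ := by
    rw [Real.exp_neg, ENNReal.ofReal_inv_of_pos (exp_pos r)]
  rw [this, Pi.inv_apply]
  exact ENNReal.inv_le_inv.2 h2x

lemma llr_abs_bdd {ρ τ : Measure O} [IsProbabilityMeasure ρ] [IsProbabilityMeasure τ] {r : ℝ}
    (hb : ∀ᵐ x ∂τ, ENNReal.ofReal (exp (-r)) ≤ ρ.rnDeriv τ x
      ∧ ρ.rnDeriv τ x ≤ ENNReal.ofReal (exp r)) :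
    ∀ᵐ x ∂τ, |llr ρ τ x| ≤ r := by
  filter_upwards [hb] with x hx
  obtain ⟨hl, hu⟩ := hx
  have hne : ρ.rnDeriv τ x ≠ ∞ := (lt_of_le_of_lt hu (ENNReal.ofReal_lt_top)).ne
  have hu' : (ρ.rnDeriv τ x).toReal ≤ exp r := by
    have := ENNReal.toReal_mono ENNReal.ofReal_ne_top hu
    rwa [ENNReal.toReal_ofReal (exp_pos r).le] at this
  have hl' : exp (-r) ≤ (ρ.rnDeriv τ x).toReal := by
    have := ENNReal.toReal_mono hne hl
    rwa [ENNReal.toReal_ofReal (exp_pos (-r)).le] at this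
  have hy : 0 < (ρ.rnDeriv τ x).toReal := lt_of_lt_of_le (exp_pos _) hl'
  rw [llr, abs_le]
  constructor
  · have := Real.log_le_log (exp_pos _) hl'
    rwa [Real.log_exp] at this
  · have := Real.log_le_log hy hu'
    rwa [Real.log_exp] at this

lemma ratio_llr_package {ρ τ : Measure O} [IsProbabilityMeasure ρ] [IsProbabilityMeasure τ] {r : ℝ}
    (h1 : ∀ s, MeasurableSet s → ρ s ≤ ENNReal.ofReal (exp r) * τ s)
    (h2 : ∀ s, MeasurableSet s → τ s ≤ ENNReal.ofReal (exp r) * ρ s) :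
    ρ ≪ τ ∧ Integrable (llr ρ τ) ρ ∧ ∫ x, llr ρ τ x ∂ρ ≤ r := by
  obtain ⟨hac, hae⟩ := ratio_facts h1 h2
  have habs : ∀ᵐ x ∂τ, |llr ρ τ x| ≤ r := llr_abs_bdd hae
  have habsρ : ∀ᵐ x ∂ρ, |llr ρ τ x| ≤ r := hac.ae_le habs
  have hint : Integrable (llr ρ τ) ρ :=
    Integrable.mono' (integrable_const r) (measurable_llr ρ τ).aestronglyMeasurable habsρ
  refine ⟨hac, hint, ?_⟩
  calc ∫ x, llr ρ τ x ∂ρ ≤ ∫ _, r ∂ρ :=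
        integral_mono_ae hint (integrable_const r)
          (by filter_upwards [habsρ] with x hx using (abs_le.1 hx).2)
  _ = r := by simp
end Aux2

section Aux3
variable {O : Type*} [MeasurableSpace O]

lemma int_eq_lint {ρ : Measure O} [IsProbabilityMeasure ρ] {g : O → ℝ} {B : ℝ}
    (hg : Measurable g) (hb : ∀ o, |g o| ≤ B) :
    ∫ o, g o ∂ρ = (∫⁻ o, ENNReal.ofReal (g o + B) ∂ρ).toReal - B := by
  have h0 : ∀ x, 0 ≤ g x + B := fun x => by have := (abs_le.1 (hb x)).1; linarith
  have h1 : ∫ x, (g x + B) ∂ρ = (∫⁻ x, ENNReal.ofReal (g x + B) ∂ρ).toReal :=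
    integral_eq_lintegral_of_nonneg_ae (Filter.Eventually.of_forall h0)
      (hg.add_const B).aestronglyMeasurable
  have h2 : ∫ x, (g x + B) ∂ρ = (∫ x, g x ∂ρ) + B := by
    rw [integral_add (integrable_of_bdd hg hb) (integrable_const B)]; simp
  linarith

lemma lint_ofReal_bdd {ρ : Measure O} [IsProbabilityMeasure ρ] {g : O → ℝ} {B : ℝ}
    (hb : ∀ o, |g o| ≤ B) :
    ∫⁻ o, ENNReal.ofReal (g o + B) ∂ρ ≤ ENNReal.ofReal (B + B) := by
  calc ∫⁻ o, ENNReal.ofReal (g o + B) ∂ρ ≤ ∫⁻ _, ENNReal.ofReal (B + B) ∂ρ :=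
        lintegral_mono fun o => ENNReal.ofReal_le_ofReal
          (add_le_add ((abs_le.1 (hb o)).2) le_rfl)
  _ = ENNReal.ofReal (B + B) := by simp

variable {α : Type*} [MeasurableSpace α]

lemma measurable_integral_kernel (κ : Kernel α O) [IsMarkovKernel κ] {g : O → ℝ} {B : ℝ}
    (hg : Measurable g) (hb : ∀ o, |g o| ≤ B) :
    Measurable fun a => ∫ o, g o ∂(κ a) := by
  have heq : (fun a => ∫ o, g o ∂(κ a))
      = fun a => (∫⁻ o, ENNReal.ofReal (g o + B) ∂(κ a)).toReal - B :=
    funext fun a => int_eq_lint hg hb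
  rw [heq]
  exact (Measurable.lintegral_kernel (κ := κ)
    ((hg.add_const B).ennreal_ofReal)).ennreal_toReal.sub measurable_const

lemma integral_bind_kernel (m : Measure α) [IsProbabilityMeasure m] (κ : Kernel α O)
    [IsMarkovKernel κ] {g : O → ℝ} {B : ℝ} (hg : Measurable g) (hb : ∀ o, |g o| ≤ B) :
    ∫ o, g o ∂(m.bind κ) = ∫ a, ∫ o, g o ∂(κ a) ∂m := by
  have hbp : IsProbabilityMeasure (m.bind (fun a => κ a)) := by
    constructor
    rw [Measure.bind_apply MeasurableSet.univ (Kernel.measurable κ).aemeasurable]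
    simp
  have hof : Measurable fun o => ENNReal.ofReal (g o + B) := (hg.add_const B).ennreal_ofReal
  set F : α → ℝ≥0∞ := fun a => ∫⁻ o, ENNReal.ofReal (g o + B) ∂(κ a) with hF
  have hFm : Measurable F := Measurable.lintegral_kernel (κ := κ) hof
  have hFb : ∀ a, F a ≤ ENNReal.ofReal (B + B) := fun a => lint_ofReal_bdd hb
  have hrw : ∀ a, ∫ o, g o ∂(κ a) = (F a).toReal - B := fun a => int_eq_lint hg hb
  calc ∫ o, g o ∂(m.bind κ)
      = (∫⁻ o, ENNReal.ofReal (g o + B) ∂(m.bind (fun a => κ a))).toReal - B :=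
        int_eq_lint hg hb
    _ = (∫⁻ a, F a ∂m).toReal - B := by
        rw [Measure.lintegral_bind (Kernel.measurable κ).aemeasurable hof.aemeasurable]
    _ = (∫ a, (F a).toReal ∂m) - B := by
        rw [integral_toReal hFm.aemeasurable (Filter.Eventually.of_forall fun a =>
          lt_of_le_of_lt (hFb a) ENNReal.ofReal_lt_top)]
    _ = ∫ a, ((F a).toReal - B) ∂m := by
        rw [integral_sub _ (integrable_const B)]
        · simp
        · refine integrable_of_bdd (B := (ENNReal.ofReal (B + B)).toReal)
            hFm.ennreal_toReal fun a => ?_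
          rw [abs_of_nonneg ENNReal.toReal_nonneg]
          exact ENNReal.toReal_mono ENNReal.ofReal_ne_top (hFb a)
    _ = ∫ a, ∫ o, g o ∂(κ a) ∂m := by
        refine integral_congr_ae (Filter.Eventually.of_forall fun a => ?_)
        exact (hrw a).symm

variable {X : Type*} [MeasurableSpace X]

lemma measurable_fin_cons {n : ℕ} (x : X) :
    Measurable fun y : Fin n → X => (Fin.cons x y : Fin (n + 1) → X) := by
  refine measurable_pi_iff.2 fun i => ?_
  refine Fin.cases ?_ (fun j => ?_) i
  · simpa using measurable_const
  · simpa using measurable_pi_apply j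

lemma measurable_int_prod_right {β : Type*} [MeasurableSpace β] (ν : Measure β)
    [IsProbabilityMeasure ν] {H : X × β → ℝ} {B : ℝ}
    (hH : Measurable H) (hb : ∀ p, |H p| ≤ B) :
    Measurable fun x => ∫ y, H (x, y) ∂ν := by
  have heq : (fun x => ∫ y, H (x, y) ∂ν)
      = fun x => (∫⁻ y, ENNReal.ofReal (H (x, y) + B) ∂ν).toReal - B :=
    funext fun x => int_eq_lint (hH.comp measurable_prodMk_left) (fun y => hb _)
  rw [heq]
  exact (Measurable.lintegral_prod_right'
    ((hH.add_const B).ennreal_ofReal)).ennreal_toReal.sub measurable_const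

lemma isProbabilityMeasure_outDist {n : ℕ} (M : Kernel (Fin n → X) O) [IsMarkovKernel M]
    (R : Measure X) [IsProbabilityMeasure R] : IsProbabilityMeasure (outDist M R) := by
  constructor
  rw [outDist, Measure.bind_apply MeasurableSet.univ (Kernel.measurable M).aemeasurable]
  simp

lemma pi_succ_eq {n : ℕ} (R : Measure X) [IsProbabilityMeasure R] :
    (Measure.pi fun _ : Fin (n + 1) => R)
      = (R.prod (Measure.pi fun _ : Fin n => R)).map
          (MeasurableEquiv.piFinSuccAbove (fun _ : Fin (n + 1) => X) 0).symm := by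
  have h := measurePreserving_piFinSuccAbove (fun _ : Fin (n + 1) => R) 0
  exact (h.symm _).map_eq.symm

lemma piFinSuccAbove_symm_cons {n : ℕ} (x : X) (y : Fin n → X) :
    (MeasurableEquiv.piFinSuccAbove (fun _ : Fin (n + 1) => X) 0).symm (x, y) = Fin.cons x y := by
  show (Fin.insertNthEquiv (fun _ : Fin (n + 1) => X) 0) (x, y) = Fin.cons x y
  simp [Fin.insertNthEquiv, Fin.insertNth_zero']

lemma hbd_int_kernel {α : Type*} [MeasurableSpace α] (κ : Kernel α O) [IsMarkovKernel κ]
    {g : O → ℝ} {B : ℝ} (hg : Measurable g) (hb : ∀ o, |g o| ≤ B) (a : α) :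
    |∫ o, g o ∂(κ a)| ≤ B := by
  haveI : IsProbabilityMeasure (κ a) := IsMarkovKernel.isProbabilityMeasure a
  refine abs_le.2 ⟨?_, ?_⟩
  · calc -B = ∫ _, -B ∂(κ a) := by simp
      _ ≤ ∫ o, g o ∂(κ a) := integral_mono_ae (integrable_const _)
          (integrable_of_bdd hg hb) (Filter.Eventually.of_forall fun o => (abs_le.1 (hb o)).1)
  · calc ∫ o, g o ∂(κ a) ≤ ∫ _, B ∂(κ a) :=
          integral_mono_ae (integrable_of_bdd hg hb) (integrable_const _)
            (Filter.Eventually.of_forall fun o => (abs_le.1 (hb o)).2)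
      _ = B := by simp

lemma integral_outDist_comap_eq {n : ℕ} (M : Kernel (Fin (n + 1) → X) O) [IsMarkovKernel M]
    (R : Measure X) [IsProbabilityMeasure R] {g : O → ℝ} {B : ℝ}
    (hg : Measurable g) (hb : ∀ o, |g o| ≤ B) (x : X) :
    ∫ o, g o ∂(outDist (M.comap (fun y => Fin.cons x y) (measurable_fin_cons x)) R)
      = ∫ y, (fun z => ∫ o, g o ∂(M z))
          ((MeasurableEquiv.piFinSuccAbove (fun _ : Fin (n + 1) => X) 0).symm (x, y))
          ∂(Measure.pi fun _ : Fin n => R) := by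
  have hcongr : ∀ y : Fin n → X,
      (fun z => ∫ o, g o ∂(M z))
          ((MeasurableEquiv.piFinSuccAbove (fun _ : Fin (n + 1) => X) 0).symm (x, y))
        = ∫ o, g o ∂((M.comap (fun y => Fin.cons x y) (measurable_fin_cons x)) y) := by
    intro y
    rw [Kernel.comap_apply, piFinSuccAbove_symm_cons]
  rw [integral_congr_ae (Filter.Eventually.of_forall hcongr)]
  exact integral_bind_kernel _ _ hg hb

lemma integral_outDist_succ {n : ℕ} (M : Kernel (Fin (n + 1) → X) O) [IsMarkovKernel M]
    (R : Measure X) [IsProbabilityMeasure R] {g : O → ℝ} {B : ℝ}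
    (hg : Measurable g) (hb : ∀ o, |g o| ≤ B) :
    ∫ o, g o ∂(outDist M R)
      = ∫ x, ∫ o, g o ∂(outDist (M.comap (fun y => Fin.cons x y) (measurable_fin_cons x)) R) ∂ R := by
  set e := MeasurableEquiv.piFinSuccAbove (fun _ : Fin (n + 1) => X) 0 with he
  set h : (Fin (n + 1) → X) → ℝ := fun z => ∫ o, g o ∂(M z) with hh
  have hhm : Measurable h := measurable_integral_kernel M hg hb
  have hhb : ∀ z, |h z| ≤ B := by
    intro z
    have : IsProbabilityMeasure (M z) := IsMarkovKernel.isProbabilityMeasure z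
    rw [hh]
    refine abs_le.2 ⟨?_, ?_⟩
    · calc -B = ∫ _, -B ∂(M z) := by simp
        _ ≤ ∫ o, g o ∂(M z) := integral_mono_ae (integrable_const _)
            (integrable_of_bdd hg hb) (Filter.Eventually.of_forall fun o => (abs_le.1 (hb o)).1)
    · calc ∫ o, g o ∂(M z) ≤ ∫ _, B ∂(M z) := integral_mono_ae
            (integrable_of_bdd hg hb) (integrable_const _)
            (Filter.Eventually.of_forall fun o => (abs_le.1 (hb o)).2)
        _ = B := by simp
  calc ∫ o, g o ∂(outDist M R) = ∫ z, h z ∂(Measure.pi fun _ : Fin (n + 1) => R) :=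
        integral_bind_kernel _ _ hg hb
    _ = ∫ p, h (e.symm p) ∂(R.prod (Measure.pi fun _ : Fin n => R)) := by
        rw [pi_succ_eq, integral_map_equiv]
    _ = ∫ x, ∫ y, h (e.symm (x, y)) ∂(Measure.pi fun _ : Fin n => R) ∂ R := by
        refine integral_prod _ ?_
        exact integrable_of_bdd (hhm.comp e.symm.measurable) fun p => hhb _
    _ = ∫ x, ∫ o, g o ∂(outDist (M.comap (fun y => Fin.cons x y) (measurable_fin_cons x)) R) ∂ R := by
        refine integral_congr_ae (Filter.Eventually.of_forall fun x => ?_)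
        dsimp only
        exact (integral_outDist_comap_eq M R hg hb x).symm

lemma measurable_int_outDist_comap {n : ℕ} (M : Kernel (Fin (n + 1) → X) O) [IsMarkovKernel M]
    (R : Measure X) [IsProbabilityMeasure R] {g : O → ℝ} {B : ℝ}
    (hg : Measurable g) (hb : ∀ o, |g o| ≤ B) :
    Measurable fun x =>
      ∫ o, g o ∂(outDist (M.comap (fun y => Fin.cons x y) (measurable_fin_cons x)) R) := by
  have heq : (fun x =>
      ∫ o, g o ∂(outDist (M.comap (fun y => Fin.cons x y) (measurable_fin_cons x)) R))
      = fun x => ∫ y, (fun p : X × (Fin n → X) => (fun z => ∫ o, g o ∂(M z))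
          ((MeasurableEquiv.piFinSuccAbove (fun _ : Fin (n + 1) => X) 0).symm p)) (x, y)
          ∂(Measure.pi fun _ : Fin n => R) :=
    funext fun x => integral_outDist_comap_eq M R hg hb x
  rw [heq]
  refine measurable_int_prod_right _ ?_ (fun p => hbd_int_kernel M hg hb _)
  exact (measurable_integral_kernel M hg hb).comp
    (MeasurableEquiv.piFinSuccAbove (fun _ : Fin (n + 1) => X) 0).symm.measurable
end Aux3

section Ham
variable {X : Type*} [DecidableEq X] {n : ℕ}

lemma ham_cons_le (x : X) (u v : Fin n → X) :
    hammingDist (Fin.cons x u : Fin (n + 1) → X) (Fin.cons x v) ≤ hammingDist u v := by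
  rw [hammingDist, hammingDist]
  have hsub : ({i | (Fin.cons x u : Fin (n + 1) → X) i ≠ (Fin.cons x v : Fin (n + 1) → X) i} : Finset (Fin (n + 1)))
      ⊆ ({i | u i ≠ v i} : Finset (Fin n)).map ⟨Fin.succ, Fin.succ_injective n⟩ := by
    intro i hi
    simp only [Finset.mem_filter, Finset.mem_univ, true_and] at hi
    revert hi
    refine Fin.cases ?_ (fun j => ?_) i <;> intro hi
    · exact absurd (by simp : (Fin.cons x u : Fin (n+1) → X) 0 = (Fin.cons x v : Fin (n+1) → X) 0) hi
    · simp only [Fin.cons_succ] at hi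
      simp only [Finset.mem_map, Finset.mem_filter, Finset.mem_univ, true_and,
        Function.Embedding.coeFn_mk]
      exact ⟨j, hi, rfl⟩
  calc _ ≤ (({i | u i ≠ v i} : Finset (Fin n)).map ⟨Fin.succ, Fin.succ_injective n⟩).card :=
        Finset.card_le_card (by convert hsub)
  _ = _ := Finset.card_map _

lemma ham_cons_head (x x' : X) (u : Fin n → X) :
    hammingDist (Fin.cons x u : Fin (n + 1) → X) (Fin.cons x' u) ≤ 1 := by
  rw [hammingDist]
  have hsub : ({i | (Fin.cons x u : Fin (n + 1) → X) i ≠ (Fin.cons x' u : Fin (n + 1) → X) i} : Finset (Fin (n + 1)))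
      ⊆ {0} := by
    intro i hi
    simp only [Finset.mem_filter, Finset.mem_univ, true_and] at hi
    revert hi
    refine Fin.cases ?_ (fun j => ?_) i <;> intro hi2
    · exact Finset.mem_singleton_self 0
    · exact absurd (by simp : (Fin.cons x u : Fin (n+1) → X) j.succ = (Fin.cons x' u : Fin (n+1) → X) j.succ) hi2
  · calc _ ≤ ({0} : Finset (Fin (n + 1))).card := Finset.card_le_card (by convert hsub)
    _ = 1 := Finset.card_singleton _

lemma ham_update_le_one (z z' : Fin n → X) (i : Fin n) :
    hammingDist z (Function.update z i (z' i)) ≤ 1 := by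
  rw [hammingDist]
  have hsub : ({j | z j ≠ Function.update z i (z' i) j} : Finset (Fin n)) ⊆ {i} := by
    intro j hj
    simp only [Finset.mem_filter, Finset.mem_univ, true_and] at hj
    by_contra hji
    simp only [Finset.mem_singleton] at hji
    exact hj (by rw [Function.update_of_ne hji])
  calc _ ≤ ({i} : Finset (Fin n)).card := Finset.card_le_card (by convert hsub)
  _ = 1 := Finset.card_singleton _

lemma ham_update_lt (z z' : Fin n → X) (i : Fin n) (hi : z i ≠ z' i) :
    hammingDist (Function.update z i (z' i)) z' + 1 ≤ hammingDist z z' := by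
  rw [hammingDist, hammingDist]
  have hmem : i ∈ ({j | z j ≠ z' j} : Finset (Fin n)) := by
    simp only [Finset.mem_filter, Finset.mem_univ, true_and]; exact hi
  have hsub : ({j | Function.update z i (z' i) j ≠ z' j} : Finset (Fin n))
      ⊆ ({j | z j ≠ z' j} : Finset (Fin n)).erase i := by
    intro j hj
    simp only [Finset.mem_filter, Finset.mem_univ, true_and] at hj
    have hji : j ≠ i := by
      intro h; subst h; exact hj (by rw [Function.update_self])
    refine Finset.mem_erase.2 ⟨hji, ?_⟩
    simp only [Finset.mem_filter, Finset.mem_univ, true_and]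
    rwa [Function.update_of_ne hji] at hj
  calc _ + 1 ≤ (({j | z j ≠ z' j} : Finset (Fin n)).erase i).card + 1 :=
        Nat.add_le_add_right (Finset.card_le_card (by convert hsub)) 1
  _ = _ := by
        have hpos : 0 < ({j | z j ≠ z' j} : Finset (Fin n)).card := Finset.card_pos.2 ⟨i, hmem⟩
        rw [Finset.card_erase_of_mem hmem]; omega
end Ham

section GP
variable {X O : Type*} [MeasurableSpace X] [MeasurableSpace O] [DecidableEq X] {n : ℕ}

lemma group_privacy {M : Kernel (Fin n → X) O} {ε : ℝ} (hε : 0 ≤ ε) (hDP : IsEpsDP M ε) :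
    ∀ (k : ℕ) (z z' : Fin n → X), hammingDist z z' ≤ k →
      ∀ S : Set O, MeasurableSet S → M z S ≤ ENNReal.ofReal (Real.exp (ε * k)) * M z' S := by
  intro k
  induction k with
  | zero =>
    intro z z' hzz S hS
    have : z = z' := hammingDist_eq_zero.1 (Nat.le_zero.1 hzz)
    subst this
    simp
  | succ k ih =>
    intro z z' hzz S hS
    by_cases hz : z = z'
    · subst hz
      refine le_mul_of_one_le_left (zero_le) ?_
      rw [show (1 : ℝ≥0∞) = ENNReal.ofReal 1 by simp]
      exact ENNReal.ofReal_le_ofReal (Real.one_le_exp (by positivity))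
    · obtain ⟨i, hi⟩ := Function.ne_iff.1 hz
      set z'' := Function.update z i (z' i) with hz''
      have h1 : M z S ≤ ENNReal.ofReal (Real.exp ε) * M z'' S :=
        hDP z z'' (ham_update_le_one z z' i) S hS
      have h2 : M z'' S ≤ ENNReal.ofReal (Real.exp (ε * k)) * M z' S := by
        refine ih z'' z' ?_ S hS
        have h3 := ham_update_lt z z' i hi
        rw [← hz''] at h3
        omega
      calc M z S ≤ ENNReal.ofReal (Real.exp ε) * (ENNReal.ofReal (Real.exp (ε * k)) * M z' S) :=
            h1.trans (mul_le_mul_right h2 _)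
      _ = (ENNReal.ofReal (Real.exp ε) * ENNReal.ofReal (Real.exp (ε * k))) * M z' S := by
            rw [mul_assoc]
      _ = ENNReal.ofReal (Real.exp (ε * ((k + 1 : ℕ) : ℝ))) * M z' S := by
            rw [← ENNReal.ofReal_mul (exp_pos ε).le, ← Real.exp_add]
            congr 2
            push_cast
            ring

lemma isEpsDP_comap {M : Kernel (Fin (n + 1) → X) O} {ε : ℝ} (hDP : IsEpsDP M ε) (x : X)
    (hm : Measurable fun y : Fin n → X => (Fin.cons x y : Fin (n + 1) → X)) :
    IsEpsDP (M.comap (fun y => Fin.cons x y) hm) ε := by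
  intro y y' h S hS
  rw [Kernel.comap_apply, Kernel.comap_apply]
  exact hDP _ _ (le_trans (ham_cons_le x y y') h) S hS
end GP

section Main
variable {X O : Type*} [MeasurableSpace X] [MeasurableSpace O] [DecidableEq X]

lemma bdd_integral_abs {ρ : Measure O} [IsProbabilityMeasure ρ] {g : O → ℝ} {B : ℝ}
    (hg : Measurable g) (hb : ∀ o, |g o| ≤ B) : |∫ o, g o ∂ρ| ≤ B := by
  refine abs_le.2 ⟨?_, ?_⟩
  · calc -B = ∫ _, -B ∂ρ := by simp
      _ ≤ ∫ o, g o ∂ρ := integral_mono_ae (integrable_const _) (integrable_of_bdd hg hb)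
          (Filter.Eventually.of_forall fun o => (abs_le.1 (hb o)).1)
  · calc ∫ o, g o ∂ρ ≤ ∫ _, B ∂ρ := integral_mono_ae (integrable_of_bdd hg hb)
          (integrable_const _) (Filter.Eventually.of_forall fun o => (abs_le.1 (hb o)).2)
      _ = B := by simp

lemma main_ind (ε : ℝ) (hε : 0 ≤ ε)
    (P Q Q' : Measure X) [IsProbabilityMeasure P] [IsProbabilityMeasure Q]
    [IsProbabilityMeasure Q']
    (hac : Q' ≪ P) (hint : Integrable (llr Q' P) Q')
    (m σ σ' : Measure X) [IsFiniteMeasure m] [IsFiniteMeasure σ] [IsFiniteMeasure σ']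
    (hQd : Q = m + σ) (hQd' : Q' = m + σ') (hσu : σ Set.univ = σ' Set.univ)
    (n : ℕ) :
    ∀ (Mq Mp : Kernel (Fin n → X) O) (_ : IsMarkovKernel Mq) (_ : IsMarkovKernel Mp)
      (_ : IsEpsDP Mq ε) (_ : IsEpsDP Mp ε) (k : ℕ)
      (_ : ∀ z S, MeasurableSet S → Mq z S ≤ ENNReal.ofReal (exp (ε * k)) * Mp z S)
      (_ : ∀ z S, MeasurableSet S → Mp z S ≤ ENNReal.ofReal (exp (ε * k)) * Mq z S)
      (f : O → ℝ) (_ : Measurable f) (R : ℝ) (_ : ∀ o, |f o| ≤ R),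
      ∫ o, f o ∂(outDist Mq Q) - log (∫ o, exp (f o) ∂(outDist Mp P))
        ≤ n * ((∫ x, llr Q' P x ∂Q') + ε * (σ' Set.univ).toReal) + ε * k := by
  induction n with
  | zero =>
    intro Mq Mp hMq hMp hq hp k hqp hpq f hf R hfb
    set z0 : Fin 0 → X := fun i => i.elim0 with hz0
    haveI : IsProbabilityMeasure (Mq z0) := IsMarkovKernel.isProbabilityMeasure z0
    haveI : IsProbabilityMeasure (Mp z0) := IsMarkovKernel.isProbabilityMeasure z0
    have houtq : outDist Mq Q = Mq z0 := by
      refine Measure.ext fun s hs => ?_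
      rw [outDist, Measure.bind_apply hs (Kernel.measurable _).aemeasurable]
      rw [lintegral_congr (g := fun _ => Mq z0 s) (fun z => by rw [Subsingleton.elim z z0])]
      simp
    have houtp : outDist Mp P = Mp z0 := by
      refine Measure.ext fun s hs => ?_
      rw [outDist, Measure.bind_apply hs (Kernel.measurable _).aemeasurable]
      rw [lintegral_congr (g := fun _ => Mp z0 s) (fun z => by rw [Subsingleton.elim z z0])]
      simp
    obtain ⟨hac0, hint0, hkl0⟩ := ratio_llr_package (r := ε * k)
      (fun s hs => hqp z0 s hs) (fun s hs => hpq z0 s hs)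
    have hg := gibbs_ineq hac0 hint0 hf hfb
    rw [houtq, houtp]
    push_cast
    simp only [Nat.cast_zero, zero_mul, zero_add]
    linarith
  | succ n ih =>
    intro Mq Mp hMq hMp hq hp k hqp hpq f hf R hfb
    -- nonemptiness and R ≥ 0
    have hXne : Nonempty X := by
      by_contra h
      have hIE : IsEmpty X := not_nonempty_iff.1 h
      have h1 : (Set.univ : Set X) = ∅ := Set.univ_eq_empty_iff.2 hIE
      have h2 := measure_univ (μ := Q)
      rw [h1, measure_empty] at h2
      exact zero_ne_one h2
    obtain ⟨x0⟩ := hXne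
    have hOne : Nonempty O := by
      by_contra h
      have hIE : IsEmpty O := not_nonempty_iff.1 h
      haveI : IsProbabilityMeasure (Mq fun _ => x0) :=
        IsMarkovKernel.isProbabilityMeasure _
      have h1 : (Set.univ : Set O) = ∅ := Set.univ_eq_empty_iff.2 hIE
      have h2 := measure_univ (μ := Mq fun _ => x0)
      rw [h1, measure_empty] at h2
      exact zero_ne_one h2
    have hR : 0 ≤ R := le_trans (abs_nonneg _) (hfb (Classical.arbitrary O))
    have hexpb : ∀ o, |exp (f o)| ≤ exp R := fun o => by
      rw [abs_of_pos (exp_pos _)]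
      exact exp_le_exp.2 (abs_le.1 (hfb o)).2
    -- the sliced kernels
    set Mqx : X → Kernel (Fin n → X) O :=
      fun x => Mq.comap (fun y => Fin.cons x y) (measurable_fin_cons x) with hMqx
    set Mpx : X → Kernel (Fin n → X) O :=
      fun x => Mp.comap (fun y => Fin.cons x y) (measurable_fin_cons x) with hMpx
    haveI hIq : ∀ x, IsMarkovKernel (Mqx x) := fun x => by
      rw [hMqx]; infer_instance
    haveI hIp : ∀ x, IsMarkovKernel (Mpx x) := fun x => by
      rw [hMpx]; infer_instance
    haveI : ∀ x, IsProbabilityMeasure (outDist (Mqx x) Q) := fun x =>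
      isProbabilityMeasure_outDist _ _
    haveI : ∀ x, IsProbabilityMeasure (outDist (Mpx x) P) := fun x =>
      isProbabilityMeasure_outDist _ _
    set φ : X → ℝ := fun x => ∫ o, f o ∂(outDist (Mqx x) Q) with hφ
    set χ : X → ℝ := fun x => log (∫ o, exp (f o) ∂(outDist (Mpx x) P)) with hχ
    have hφm : Measurable φ := measurable_int_outDist_comap Mq Q hf hfb
    have hIm : Measurable fun x => ∫ o, exp (f o) ∂(outDist (Mpx x) P) :=
      measurable_int_outDist_comap Mp P hf.exp hexpb
    have hχm : Measurable χ := Real.measurable_log.comp hIm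
    have hφb : ∀ x, |φ x| ≤ R := fun x => bdd_integral_abs hf hfb
    have hIlb : ∀ x, exp (-R) ≤ ∫ o, exp (f o) ∂(outDist (Mpx x) P) := by
      intro x
      calc exp (-R) = ∫ _, exp (-R) ∂(outDist (Mpx x) P) := by simp
        _ ≤ ∫ o, exp (f o) ∂(outDist (Mpx x) P) := integral_mono_ae (integrable_const _)
            (integrable_of_bdd hf.exp hexpb)
            (Filter.Eventually.of_forall fun o => exp_le_exp.2 (abs_le.1 (hfb o)).1)
    have hIub : ∀ x, ∫ o, exp (f o) ∂(outDist (Mpx x) P) ≤ exp R := fun x => by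
      have := bdd_integral_abs (ρ := outDist (Mpx x) P) hf.exp hexpb
      exact (abs_le.1 this).2
    have hχb : ∀ x, |χ x| ≤ R := by
      intro x
      rw [hχ]
      refine abs_le.2 ⟨?_, ?_⟩
      · calc -R = log (exp (-R)) := (Real.log_exp _).symm
          _ ≤ _ := Real.log_le_log (exp_pos _) (hIlb x)
      · calc log (∫ o, exp (f o) ∂(outDist (Mpx x) P)) ≤ log (exp R) :=
            Real.log_le_log (lt_of_lt_of_le (exp_pos _) (hIlb x)) (hIub x)
          _ = R := Real.log_exp _
    set c : ℝ := ∫ x, llr Q' P x ∂Q' with hc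
    set t : ℝ := (σ' Set.univ).toReal with ht
    set D : ℝ := n * (c + ε * t) with hD
    have ht0 : 0 ≤ t := ENNReal.toReal_nonneg
    -- IH diagonal and cross bounds
    have key1 : ∀ x, φ x - χ x ≤ D + ε * k := by
      intro x
      refine ih (Mqx x) (Mpx x) (hIq x) (hIp x)
        (isEpsDP_comap hq x _) (isEpsDP_comap hp x _) k ?_ ?_ f hf R hfb
      · intro z S hS
        rw [hMqx, hMpx, Kernel.comap_apply, Kernel.comap_apply]
        exact hqp _ S hS
      · intro z S hS
        rw [hMqx, hMpx, Kernel.comap_apply, Kernel.comap_apply]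
        exact hpq _ S hS
    have key2 : ∀ x y, φ y - χ x ≤ D + ε * ((k : ℝ) + 1) := by
      intro x y
      have hqp'' : ∀ (z : Fin n → X) (S : Set O), MeasurableSet S →
          (Mqx y) z S ≤ ENNReal.ofReal (exp (ε * ((k + 1 : ℕ) : ℝ))) * (Mpx x) z S := by
        intro z S hS
        rw [hMqx, hMpx, Kernel.comap_apply, Kernel.comap_apply]
        calc Mq (Fin.cons y z) S
            ≤ ENNReal.ofReal (exp ε) * Mq (Fin.cons x z) S :=
              hq _ _ (ham_cons_head y x z) S hS
          _ ≤ ENNReal.ofReal (exp ε) * (ENNReal.ofReal (exp (ε * k)) * Mp (Fin.cons x z) S) :=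
              mul_le_mul_right (hqp _ S hS) _
          _ = ENNReal.ofReal (exp (ε * (k + 1 : ℕ))) * Mp (Fin.cons x z) S := by
              rw [← mul_assoc, ← ENNReal.ofReal_mul (exp_pos ε).le, ← Real.exp_add]
              congr 2
              push_cast
              ring
      have hpq'' : ∀ (z : Fin n → X) (S : Set O), MeasurableSet S →
          (Mpx x) z S ≤ ENNReal.ofReal (exp (ε * ((k + 1 : ℕ) : ℝ))) * (Mqx y) z S := by
        intro z S hS
        rw [hMqx, hMpx, Kernel.comap_apply, Kernel.comap_apply]
        calc Mp (Fin.cons x z) S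
            ≤ ENNReal.ofReal (exp (ε * k)) * Mq (Fin.cons x z) S := hpq _ S hS
          _ ≤ ENNReal.ofReal (exp (ε * k)) * (ENNReal.ofReal (exp ε) * Mq (Fin.cons y z) S) :=
              mul_le_mul_right (hq _ _ (ham_cons_head x y z) S hS) _
          _ = ENNReal.ofReal (exp (ε * (k + 1 : ℕ))) * Mq (Fin.cons y z) S := by
              rw [← mul_assoc, ← ENNReal.ofReal_mul (exp_pos _).le, ← Real.exp_add]
              congr 2
              push_cast
              ring
      have h := ih (Mqx y) (Mpx x) (hIq y) (hIp x)
        (isEpsDP_comap hq y _) (isEpsDP_comap hp x _) (k + 1) hqp'' hpq'' f hf R hfb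
      push_cast at h
      linarith
    -- integral decompositions
    have E1 : ∫ o, f o ∂(outDist Mq Q) = ∫ x, φ x ∂Q := integral_outDist_succ Mq Q hf hfb
    have E2 : ∫ o, exp (f o) ∂(outDist Mp P) = ∫ x, exp (χ x) ∂P := by
      rw [integral_outDist_succ Mp P hf.exp hexpb]
      refine integral_congr_ae (Filter.Eventually.of_forall fun x => ?_)
      rw [hχ]
      exact (Real.exp_log (lt_of_lt_of_le (exp_pos _) (hIlb x))).symm
    -- measure decomposition of the Q-integral
    have hφQ : Integrable φ Q := integrable_of_bdd hφm hφb
    have hφim : Integrable φ m := integrable_of_bdd hφm hφb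
    have hφiσ : Integrable φ σ := integrable_of_bdd hφm hφb
    have hχim : Integrable χ m := integrable_of_bdd hχm hχb
    have hχiσ' : Integrable χ σ' := integrable_of_bdd hχm hχb
    have hχiQ' : Integrable χ Q' := integrable_of_bdd hχm hχb
    have hsplitQ : ∫ x, φ x ∂Q = (∫ x, φ x ∂m) + ∫ x, φ x ∂σ := by
      rw [hQd]; exact integral_add_measure hφim hφiσ
    have hsplitQ' : ∫ x, χ x ∂Q' = (∫ x, χ x ∂m) + ∫ x, χ x ∂σ' := by
      rw [hQd']; exact integral_add_measure hχim hχiσ'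
    have ha1 : (m Set.univ).toReal + t = 1 := by
      have h1 : m Set.univ + σ' Set.univ = 1 := by
        rw [← Measure.add_apply, ← hQd']
        exact measure_univ
      have h2 := congrArg ENNReal.toReal h1
      rw [ENNReal.toReal_add (measure_ne_top m _) (measure_ne_top σ' _)] at h2
      simpa using h2
    have hA : ∫ x, φ x ∂m ≤ (D + ε * k) * (m Set.univ).toReal + ∫ x, χ x ∂m := by
      calc ∫ x, φ x ∂m ≤ ∫ x, ((D + ε * k) + χ x) ∂m :=
            integral_mono_ae hφim ((integrable_const _).add hχim)
              (Filter.Eventually.of_forall fun x => by dsimp only; linarith [key1 x])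
        _ = (D + ε * k) * (m Set.univ).toReal + ∫ x, χ x ∂m := by
            rw [integral_add (integrable_const _) hχim, integral_const, smul_eq_mul, measureReal_def, mul_comm]
    have hB : ∫ x, φ x ∂σ ≤ (D + ε * (k + 1)) * t + ∫ x, χ x ∂σ' := by
      by_cases hσ0 : σ' Set.univ = 0
      · have hσ'0 : σ' = 0 := Measure.measure_univ_eq_zero.1 hσ0
        have hσz : σ = 0 := Measure.measure_univ_eq_zero.1 (by rw [hσu, hσ0])
        rw [hσ'0, hσz]
        simp [ht, hσ0]
      · have htpos : 0 < t := by
          rw [ht]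
          exact ENNReal.toReal_pos hσ0 (measure_ne_top σ' _)
        have hptw : ∀ y, φ y ≤ (D + ε * (k + 1)) + t⁻¹ * ∫ x, χ x ∂σ' := by
          intro y
          have h1 : t * φ y ≤ t * (D + ε * (k + 1)) + ∫ x, χ x ∂σ' := by
            calc t * φ y = ∫ _, φ y ∂σ' := by
                  rw [integral_const, smul_eq_mul, measureReal_def, ← ht]
              _ ≤ ∫ x, ((D + ε * (k + 1)) + χ x) ∂σ' :=
                  integral_mono_ae (integrable_const _) ((integrable_const _).add hχiσ')
                    (Filter.Eventually.of_forall fun x => by dsimp only; linarith [key2 x y])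
              _ = t * (D + ε * (k + 1)) + ∫ x, χ x ∂σ' := by
                  rw [integral_add (integrable_const _) hχiσ', integral_const, smul_eq_mul, measureReal_def, ← ht,
                    mul_comm]
          have h2 : t * φ y ≤ t * ((D + ε * (k + 1)) + t⁻¹ * ∫ x, χ x ∂σ') := by
            calc t * φ y ≤ t * (D + ε * (k + 1)) + ∫ x, χ x ∂σ' := h1
              _ = t * ((D + ε * (k + 1)) + t⁻¹ * ∫ x, χ x ∂σ') := by
                  field_simp
          exact (mul_le_mul_iff_right₀ htpos).1 h2
        calc ∫ x, φ x ∂σ ≤ ∫ _, ((D + ε * (k + 1)) + t⁻¹ * ∫ x, χ x ∂σ') ∂σ :=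
              integral_mono_ae hφiσ (integrable_const _)
                (Filter.Eventually.of_forall fun y => by dsimp only; exact hptw y)
          _ = (σ Set.univ).toReal * ((D + ε * (k + 1)) + t⁻¹ * ∫ x, χ x ∂σ') := by
              rw [integral_const, smul_eq_mul, measureReal_def]
          _ = t * ((D + ε * (k + 1)) + t⁻¹ * ∫ x, χ x ∂σ') := by
              rw [ht, hσu]
          _ = (D + ε * (k + 1)) * t + ∫ x, χ x ∂σ' := by
              field_simp
    -- Gibbs step on (Q', P)
    have hgibbs : ∫ x, χ x ∂Q' ≤ c + log (∫ x, exp (χ x) ∂P) := by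
      have := gibbs_ineq hac hint hχm hχb
      rw [← hc] at this
      linarith
    -- assemble
    have hfin : ∫ o, f o ∂(outDist Mq Q) - log (∫ o, exp (f o) ∂(outDist Mp P))
        ≤ D + ε * k + ε * t + c := by
      have harith : (D + ε * k) * (m Set.univ).toReal + (D + ε * (k + 1)) * t
          = D + ε * k + ε * t := by
        have hmu : (m Set.univ).toReal = 1 - t := by linarith
        rw [hmu]
        ring
      rw [E1, E2]
      calc ∫ x, φ x ∂Q - log (∫ x, exp (χ x) ∂P)
          = (∫ x, φ x ∂m) + (∫ x, φ x ∂σ) - log (∫ x, exp (χ x) ∂P) := by rw [hsplitQ]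
        _ ≤ ((D + ε * k) * (m Set.univ).toReal + ∫ x, χ x ∂m)
            + ((D + ε * (k + 1)) * t + ∫ x, χ x ∂σ') - log (∫ x, exp (χ x) ∂P) := by
            linarith [hA, hB]
        _ = (D + ε * k) * (m Set.univ).toReal + (D + ε * (k + 1)) * t
            + (∫ x, χ x ∂Q') - log (∫ x, exp (χ x) ∂P) := by
            rw [hsplitQ']; ring
        _ ≤ (D + ε * k) * (m Set.univ).toReal + (D + ε * (k + 1)) * t + c := by
            linarith [hgibbs]
        _ = D + ε * k + ε * t + c := by rw [harith]
    calc ∫ o, f o ∂(outDist Mq Q) - log (∫ o, exp (f o) ∂(outDist Mp P))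
        ≤ D + ε * k + ε * t + c := hfin
      _ = (n + 1 : ℕ) * (c + ε * t) + ε * k := by
          rw [hD]
          push_cast
          ring
end Main

theorem dp_klDiv_le_klDiv_add_tv {X O : Type*} [MeasurableSpace X]
    [MeasurableSpace O] [DecidableEq X] {n : ℕ} (M : Kernel (Fin n → X) O)
    [IsMarkovKernel M] (ε : ℝ) (hε : 0 ≤ ε) (hDP : IsEpsDP M ε)
    (P Q Q' : Measure X) [IsProbabilityMeasure P] [IsProbabilityMeasure Q]
    [IsProbabilityMeasure Q'] :
    klDiv (outDist M Q) (outDist M P) / (n : ℝ≥0∞) ≤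
      klDiv Q' P + ENNReal.ofReal ε * tvDist Q' Q := by
  by_cases hKL : klDiv Q' P = ⊤
  · rw [hKL, top_add]
    exact le_top
  have hcond : Q' ≪ P ∧ Integrable (llr Q' P) Q' := by
    by_contra h
    rw [klDiv, if_neg h] at hKL
    exact hKL rfl
  obtain ⟨hacQP, hintQP⟩ := hcond
  set ν := outDist M Q with hν
  set μ := outDist M P with hμ
  haveI : IsProbabilityMeasure ν := isProbabilityMeasure_outDist M Q
  haveI : IsProbabilityMeasure μ := isProbabilityMeasure_outDist M P
  -- Hahn decomposition of Q' - Q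
  obtain ⟨S, hSm, hS1, hS2⟩ := hahn_decomposition (μ := Q') (ν := Q)
  set m : Measure X := Q.restrict S + Q'.restrict Sᶜ with hm
  have hmQ : m ≤ Q := by
    refine Measure.le_iff.2 fun A hA => ?_
    rw [hm, Measure.add_apply, Measure.restrict_apply hA, Measure.restrict_apply hA]
    have h1 : Q' (A ∩ Sᶜ) ≤ Q (A ∩ Sᶜ) :=
      hS2 _ (hA.inter hSm.compl) Set.inter_subset_right
    calc Q (A ∩ S) + Q' (A ∩ Sᶜ) ≤ Q (A ∩ S) + Q (A ∩ Sᶜ) := add_le_add le_rfl h1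
      _ = Q (A ∩ S) + Q (A \ S) := by rw [Set.diff_eq]
      _ = Q A := measure_inter_add_diff A hSm
  have hmQ' : m ≤ Q' := by
    refine Measure.le_iff.2 fun A hA => ?_
    rw [hm, Measure.add_apply, Measure.restrict_apply hA, Measure.restrict_apply hA]
    have h1 : Q (A ∩ S) ≤ Q' (A ∩ S) := hS1 _ (hA.inter hSm) Set.inter_subset_right
    calc Q (A ∩ S) + Q' (A ∩ Sᶜ) ≤ Q' (A ∩ S) + Q' (A ∩ Sᶜ) := add_le_add h1 le_rfl
      _ = Q' (A ∩ S) + Q' (A \ S) := by rw [Set.diff_eq]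
      _ = Q' A := measure_inter_add_diff A hSm
  haveI hmfin : IsFiniteMeasure m := by
    constructor
    rw [hm, Measure.add_apply]
    exact lt_of_le_of_lt (add_le_add (Measure.restrict_le_self _)
      (Measure.restrict_le_self _)) (by rw [measure_univ, measure_univ]; norm_num)
  set σm : Measure X := Q - m with hσm
  set σ'm : Measure X := Q' - m with hσ'm
  haveI : IsFiniteMeasure σm := isFiniteMeasure_of_le Q Measure.sub_le
  haveI : IsFiniteMeasure σ'm := isFiniteMeasure_of_le Q' Measure.sub_le
  have hQd : Q = m + σm := by
    rw [hσm, add_comm]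
    exact (Measure.sub_add_cancel_of_le hmQ).symm
  have hQd' : Q' = m + σ'm := by
    rw [hσ'm, add_comm]
    exact (Measure.sub_add_cancel_of_le hmQ').symm
  have hσu : σm Set.univ = σ'm Set.univ := by
    rw [hσm, hσ'm, Measure.sub_apply MeasurableSet.univ hmQ,
      Measure.sub_apply MeasurableSet.univ hmQ', measure_univ (μ := Q), measure_univ (μ := Q')]
  have htv : σ'm Set.univ ≤ tvDist Q' Q := by
    have hcancel : σ'm Set.univ + Q S = Q' S := by
      have h1 : σ'm Set.univ + m Set.univ = 1 := by
        rw [add_comm, ← Measure.add_apply, ← hQd']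
        exact measure_univ
      have hm_univ : m Set.univ = Q S + Q' Sᶜ := by
        rw [hm, Measure.add_apply, Measure.restrict_apply MeasurableSet.univ,
          Measure.restrict_apply MeasurableSet.univ, Set.univ_inter, Set.univ_inter]
      have h2 : Q' S + Q' Sᶜ = 1 := by
        have := measure_inter_add_diff (μ := Q') Set.univ hSm
        rw [Set.univ_inter, ← Set.compl_eq_univ_diff, measure_univ] at this
        exact this
      have h3 : σ'm Set.univ + Q S + Q' Sᶜ = Q' S + Q' Sᶜ := by
        rw [add_assoc, ← hm_univ, h1, h2]
      exact WithTop.add_right_cancel (measure_ne_top Q' _) h3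
    have h4 : σ'm Set.univ ≤ Q' S - Q S :=
      le_of_eq (ENNReal.eq_sub_of_add_eq (measure_ne_top Q _) hcancel)
    refine le_trans h4 ?_
    exact le_iSup₂ (f := fun (s : Set X) (_ : MeasurableSet s) => Q' s - Q s) S hSm
  -- two-sided bound between ν and μ
  have h1 : ∀ s, MeasurableSet s → ν s ≤ ENNReal.ofReal (exp (ε * n)) * μ s := by
    intro s hs
    have hzz : ∀ z z' : Fin n → X, M z s ≤ ENNReal.ofReal (exp (ε * n)) * M z' s := fun z z' =>
      group_privacy hε hDP n z z' (le_trans hammingDist_le_card_fintype (by simp)) s hs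
    have hνb : ∀ z' : Fin n → X, ν s ≤ ENNReal.ofReal (exp (ε * n)) * M z' s := by
      intro z'
      rw [hν, outDist, Measure.bind_apply hs (Kernel.measurable M).aemeasurable]
      calc ∫⁻ z, M z s ∂(Measure.pi fun _ : Fin n => Q)
          ≤ ∫⁻ _, ENNReal.ofReal (exp (ε * n)) * M z' s ∂(Measure.pi fun _ : Fin n => Q) :=
            lintegral_mono fun z => hzz z z'
        _ = ENNReal.ofReal (exp (ε * n)) * M z' s := by
            rw [lintegral_const, measure_univ, mul_one]
    calc ν s = ∫⁻ _, ν s ∂(Measure.pi fun _ : Fin n => P) := by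
          rw [lintegral_const, measure_univ, mul_one]
      _ ≤ ∫⁻ z', ENNReal.ofReal (exp (ε * n)) * M z' s ∂(Measure.pi fun _ : Fin n => P) :=
          lintegral_mono fun z' => hνb z'
      _ = ENNReal.ofReal (exp (ε * n)) * ∫⁻ z', M z' s ∂(Measure.pi fun _ : Fin n => P) :=
          lintegral_const_mul _ (Kernel.measurable_coe M hs)
      _ = ENNReal.ofReal (exp (ε * n)) * μ s := by
          rw [hμ, outDist, Measure.bind_apply hs (Kernel.measurable M).aemeasurable]
  have h2 : ∀ s, MeasurableSet s → μ s ≤ ENNReal.ofReal (exp (ε * n)) * ν s := by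
    intro s hs
    have hzz : ∀ z z' : Fin n → X, M z s ≤ ENNReal.ofReal (exp (ε * n)) * M z' s := fun z z' =>
      group_privacy hε hDP n z z' (le_trans hammingDist_le_card_fintype (by simp)) s hs
    have hμb : ∀ z' : Fin n → X, μ s ≤ ENNReal.ofReal (exp (ε * n)) * M z' s := by
      intro z'
      rw [hμ, outDist, Measure.bind_apply hs (Kernel.measurable M).aemeasurable]
      calc ∫⁻ z, M z s ∂(Measure.pi fun _ : Fin n => P)
          ≤ ∫⁻ _, ENNReal.ofReal (exp (ε * n)) * M z' s ∂(Measure.pi fun _ : Fin n => P) :=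
            lintegral_mono fun z => hzz z z'
        _ = ENNReal.ofReal (exp (ε * n)) * M z' s := by
            rw [lintegral_const, measure_univ, mul_one]
    calc μ s = ∫⁻ _, μ s ∂(Measure.pi fun _ : Fin n => Q) := by
          rw [lintegral_const, measure_univ, mul_one]
      _ ≤ ∫⁻ z', ENNReal.ofReal (exp (ε * n)) * M z' s ∂(Measure.pi fun _ : Fin n => Q) :=
          lintegral_mono fun z' => hμb z'
      _ = ENNReal.ofReal (exp (ε * n)) * ∫⁻ z', M z' s ∂(Measure.pi fun _ : Fin n => Q) :=
          lintegral_const_mul _ (Kernel.measurable_coe M hs)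
      _ = ENNReal.ofReal (exp (ε * n)) * ν s := by
          rw [hν, outDist, Measure.bind_apply hs (Kernel.measurable M).aemeasurable]
  obtain ⟨hACνμ, haeRN⟩ := ratio_facts h1 h2
  have habsμ : ∀ᵐ o ∂μ, |llr ν μ o| ≤ ε * n := llr_abs_bdd haeRN
  have habsν : ∀ᵐ o ∂ν, |llr ν μ o| ≤ ε * n := hACνμ.ae_le habsμ
  have hintν : Integrable (llr ν μ) ν :=
    Integrable.mono' (integrable_const (ε * n)) (measurable_llr ν μ).aestronglyMeasurable habsν
  -- truncation of llr
  set R0 : ℝ := ε * n with hR0def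
  have hR0 : 0 ≤ R0 := by positivity
  set ftil : O → ℝ := fun o => max (-R0) (min R0 (llr ν μ o)) with hftil
  have hftm : Measurable ftil :=
    measurable_const.max (measurable_const.min (measurable_llr ν μ))
  have hftb : ∀ o, |ftil o| ≤ R0 := by
    intro o
    refine abs_le.2 ⟨?_, ?_⟩
    · exact le_max_left _ _
    · exact max_le (neg_le_self hR0) (min_le_left _ _)
  have hclamp : ∀ v : ℝ, |v| ≤ R0 → max (-R0) (min R0 v) = v := by
    intro v hv
    rw [min_eq_right (abs_le.1 hv).2, max_eq_right (abs_le.1 hv).1]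
  have hfeqν : ftil =ᵐ[ν] llr ν μ := by
    filter_upwards [habsν] with o ho using hclamp _ ho
  have hfeqμ : ftil =ᵐ[μ] llr ν μ := by
    filter_upwards [habsμ] with o ho using hclamp _ ho
  -- exp of truncation integrates to ≤ 1 under μ
  have hexp1 : ∫ o, exp (ftil o) ∂μ ≤ 1 := by
    have haeμ : ∀ᵐ o ∂μ, exp (ftil o) = (ν.rnDeriv μ o).toReal := by
      filter_upwards [hfeqμ, haeRN, Measure.rnDeriv_lt_top ν μ] with o hA hB hC
      rw [hA, llr]
      refine Real.exp_log (ENNReal.toReal_pos ?_ hC.ne)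
      exact (lt_of_lt_of_le (ENNReal.ofReal_pos.2 (exp_pos _)) hB.1).ne'
    rw [integral_congr_ae haeμ]
    rw [integral_toReal (Measure.measurable_rnDeriv ν μ).aemeasurable (Measure.rnDeriv_lt_top ν μ)]
    rw [Measure.lintegral_rnDeriv hACνμ]
    simp
  have hlog0 : log (∫ o, exp (ftil o) ∂μ) ≤ 0 :=
    Real.log_nonpos (integral_nonneg fun o => (exp_pos _).le) hexp1
  -- apply the main induction with k = 0
  have hmain := main_ind (O := O) ε hε P Q Q' hacQP hintQP m σm σ'm hQd hQd' hσu n M M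
    inferInstance inferInstance hDP hDP 0
    (by intro z s hs; simp)
    (by intro z s hs; simp)
    ftil hftm R0 hftb
  simp only [Nat.cast_zero, mul_zero, add_zero] at hmain
  have hklν : ∫ o, llr ν μ o ∂ν
      ≤ n * ((∫ x, llr Q' P x ∂Q') + ε * (σ'm Set.univ).toReal) := by
    have he : ∫ o, ftil o ∂ν = ∫ o, llr ν μ o ∂ν := integral_congr_ae hfeqν
    rw [← hν, ← hμ] at hmain
    linarith [hmain, hlog0, he.symm.le, he.le]
  -- conclude in ℝ≥0∞
  have hklfin : klDiv ν μ = ENNReal.ofReal (∫ o, llr ν μ o ∂ν) := by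
    rw [klDiv, if_pos ⟨hACνμ, hintν⟩]
  have hklQP : klDiv Q' P = ENNReal.ofReal (∫ x, llr Q' P x ∂Q') := by
    rw [klDiv, if_pos ⟨hacQP, hintQP⟩]
  set c : ℝ := ∫ x, llr Q' P x ∂Q' with hc
  set t : ℝ := (σ'm Set.univ).toReal with htdef
  have chain : klDiv ν μ ≤ n * (klDiv Q' P + ENNReal.ofReal ε * tvDist Q' Q) := by
    calc klDiv ν μ = ENNReal.ofReal (∫ o, llr ν μ o ∂ν) := hklfin
      _ ≤ ENNReal.ofReal (n * (c + ε * t)) := ENNReal.ofReal_le_ofReal hklν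
      _ = (n : ℝ≥0∞) * ENNReal.ofReal (c + ε * t) := by
          rw [ENNReal.ofReal_mul (Nat.cast_nonneg n), ENNReal.ofReal_natCast]
      _ ≤ (n : ℝ≥0∞) * (ENNReal.ofReal c + ENNReal.ofReal ε * ENNReal.ofReal t) := by
          refine mul_le_mul_right ?_ _
          refine le_trans ENNReal.ofReal_add_le (add_le_add le_rfl ?_)
          rw [ENNReal.ofReal_mul hε]
      _ ≤ (n : ℝ≥0∞) * (klDiv Q' P + ENNReal.ofReal ε * tvDist Q' Q) := by
          refine mul_le_mul_right (add_le_add ?_ (mul_le_mul_right ?_ _)) _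
          · rw [hklQP]
          · calc ENNReal.ofReal t = σ'm Set.univ := ENNReal.ofReal_toReal (measure_ne_top _ _)
              _ ≤ tvDist Q' Q := htv
  exact ENNReal.div_le_of_le_mul' chain
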